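/- Let G be a simple graph with n vertices and m edges such that there exists a set F of at most k edges with G − F a starforest. Then G contains at least m − 3k vertices of degree 1. -/

import Mathlib

open SimpleGraph

/-- A starforest is an acyclic graph in which every connected component has at most one
vertex of degree greater than 1 (i.e. every component is a star). -/
def SimpleGraph.IsStarforest {V : Type*} (H : SimpleGraph V) : Prop :=
  H.IsAcyclic ∧ ∀ c : H.ConnectedComponent,
    {v : V | H.connectedComponentMk v = c ∧ 1 < (H.neighborSet v).ncard}.Subsingleton

private lemma aux_touch_bound {V : Type*} (F : Set (Sym2 V)) (hFfin : F.Finite) :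
    {v : V | ∃ e ∈ F, v ∈ e}.ncard ≤ 2 * F.ncard := by
  classical
  refine Set.Finite.induction_on (motive := fun F _ => {v : V | ∃ e ∈ F, v ∈ e}.ncard ≤ 2 * F.ncard)
    F hFfin (by simp) ?_
  intro e F heF hFfin ih
  have hsub : {v : V | ∃ e' ∈ insert e F, v ∈ e'} ⊆
      {v : V | v ∈ e} ∪ {v : V | ∃ e' ∈ F, v ∈ e'} := by
    rintro v ⟨e', he', hv⟩
    rcases he' with rfl | he'
    · exact Or.inl hv
    · exact Or.inr ⟨e', he', hv⟩
  have h1 : {v : V | v ∈ e}.ncard ≤ 2 := by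
    induction e using Sym2.ind with
    | _ a b =>
      have : {v : V | v ∈ s(a, b)} ⊆ {a, b} := by
        intro v hv
        simpa [Sym2.mem_iff] using hv
      calc {v : V | v ∈ s(a, b)}.ncard ≤ ({a, b} : Set V).ncard :=
            Set.ncard_le_ncard this ((Set.finite_singleton b).insert a)
        _ ≤ 2 := Set.ncard_insert_le _ _ |>.trans (by simp)
  have hfinmem : ∀ e' : Sym2 V, {v : V | v ∈ e'}.Finite := by
    intro e'
    induction e' using Sym2.ind with
    | _ a b =>
      apply Set.Finite.subset ((Set.finite_singleton b).insert a)
      intro v hv; simpa [Sym2.mem_iff] using hv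
  have hfin2 : ({v : V | v ∈ e} ∪ {v : V | ∃ e' ∈ F, v ∈ e'}).Finite := by
    apply Set.Finite.union (hfinmem e)
    apply Set.Finite.subset (hFfin.biUnion (fun e' _ => hfinmem e'))
    rintro v ⟨e', he', hv⟩
    exact Set.mem_biUnion he' hv
  calc {v : V | ∃ e' ∈ insert e F, v ∈ e'}.ncard
      ≤ ({v : V | v ∈ e} ∪ {v : V | ∃ e' ∈ F, v ∈ e'}).ncard :=
        Set.ncard_le_ncard hsub hfin2
    _ ≤ {v : V | v ∈ e}.ncard + {v : V | ∃ e' ∈ F, v ∈ e'}.ncard :=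
        Set.ncard_union_le _ _
    _ ≤ 2 + 2 * F.ncard := by omega
    _ = 2 * (insert e F).ncard := by
        rw [Set.ncard_insert_of_notMem heF hFfin]; ring

/-- In a graph where every component has at most one vertex of degree > 1, the number of
edges is at most the number of degree-1 vertices. -/
private lemma aux_edges_le_leaves {V : Type*} [Fintype V] (H : SimpleGraph V)
    (hsf : ∀ c : H.ConnectedComponent,
      {v : V | H.connectedComponentMk v = c ∧ 1 < (H.neighborSet v).ncard}.Subsingleton) :
    H.edgeSet.ncard ≤ {v : V | (H.neighborSet v).ncard = 1}.ncard := by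
  classical
  -- each edge has an endpoint of degree 1
  have hex : ∀ e ∈ H.edgeSet, ∃ v, v ∈ e ∧ (H.neighborSet v).ncard = 1 := by
    intro e he
    induction e using Sym2.ind with
    | _ a b =>
      rw [SimpleGraph.mem_edgeSet] at he
      have hdega : 1 ≤ (H.neighborSet a).ncard := by
        have := (Set.ncard_pos (Set.toFinite _)).mpr (⟨b, he⟩ : (H.neighborSet a).Nonempty)
        omega
      have hdegb : 1 ≤ (H.neighborSet b).ncard := by
        have := (Set.ncard_pos (Set.toFinite _)).mpr (⟨a, he.symm⟩ : (H.neighborSet b).Nonempty)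
        omega
      by_contra hcon
      push_neg at hcon
      have ha := hcon a (by simp)
      have hb := hcon b (by simp)
      have ha' : 1 < (H.neighborSet a).ncard := lt_of_le_of_ne hdega (Ne.symm ha)
      have hb' : 1 < (H.neighborSet b).ncard := lt_of_le_of_ne hdegb (Ne.symm hb)
      have hc : H.connectedComponentMk a = H.connectedComponentMk b :=
        SimpleGraph.ConnectedComponent.sound he.reachable
      have := hsf (H.connectedComponentMk b) ⟨hc, ha'⟩ ⟨rfl, hb'⟩
      exact he.ne this
  have hex' : ∀ e : Sym2 V, ∃ v, e ∈ H.edgeSet → v ∈ e ∧ (H.neighborSet v).ncard = 1 := by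
    intro e
    by_cases he : e ∈ H.edgeSet
    · obtain ⟨v, hv⟩ := hex e he
      exact ⟨v, fun _ => hv⟩
    · exact ⟨(Quot.out e).1, fun h => absurd h he⟩
  choose f hf using hex'
  apply Set.ncard_le_ncard_of_injOn f
  · intro e he
    exact (hf e he).2
  · intro e1 h1 e2 h2 heq
    set v := f e2 with hv
    have hv1 : v ∈ e1 := heq ▸ (hf e1 h1).1
    have hv2 : v ∈ e2 := (hf e2 h2).1
    have hdeg : (H.neighborSet v).ncard = 1 := (hf e2 h2).2
    -- both e1 and e2 are in the incidence set of v, which has size = degree = 1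
    have hsub : ({e1, e2} : Set (Sym2 V)) ⊆ H.incidenceSet v := by
      rintro e (rfl | rfl)
      · exact ⟨h1, hv1⟩
      · exact ⟨h2, hv2⟩
    have hcard : (H.incidenceSet v).ncard = 1 := by
      have h' : (H.incidenceSet v).ncard = (H.neighborSet v).ncard := by
        rw [← Nat.card_coe_set_eq, ← Nat.card_coe_set_eq]
        exact Nat.card_congr (H.incidenceSetEquivNeighborSet v)
      rw [h', hdeg]
    by_contra hne
    have h2le : 2 ≤ (H.incidenceSet v).ncard := by
      have : ({e1, e2} : Set (Sym2 V)).ncard = 2 := Set.ncard_pair hne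
      calc 2 = ({e1, e2} : Set (Sym2 V)).ncard := this.symm
        _ ≤ (H.incidenceSet v).ncard :=
          Set.ncard_le_ncard hsub (Set.Finite.subset H.edgeSet.toFinite
            (fun e he => he.1))
    omega

/-- If there exists a set `F` of at most `k` edges of `G` with `G - F` a
starforest, then `G` contains at least `m - 3k` vertices of degree 1, where `m` is the
number of edges of `G`. -/
theorem degree_one_lower_bound {V : Type*} [Fintype V] (G : SimpleGraph V) (k : ℕ)
    (F : Set (Sym2 V)) (hF : F ⊆ G.edgeSet) (hk : F.ncard ≤ k)
    (hsf : (G.deleteEdges F).IsStarforest) :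
    G.edgeSet.ncard - 3 * k ≤ {v : V | (G.neighborSet v).ncard = 1}.ncard := by
  classical
  set H := G.deleteEdges F with hH
  have hFfin : F.Finite := Set.Finite.subset G.edgeSet.toFinite hF
  have hHedge : H.edgeSet = G.edgeSet \ F := SimpleGraph.edgeSet_deleteEdges F
  have hdiff : H.edgeSet.ncard = G.edgeSet.ncard - F.ncard := by
    rw [hHedge]
    exact Set.ncard_diff hF (Set.toFinite _)
  have hFle : F.ncard ≤ G.edgeSet.ncard := Set.ncard_le_ncard hF (Set.toFinite _)
  have hA : H.edgeSet.ncard ≤ {v : V | (H.neighborSet v).ncard = 1}.ncard :=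
    aux_edges_le_leaves H hsf.2
  have hBsub : {v : V | (H.neighborSet v).ncard = 1} ⊆
      {v : V | (G.neighborSet v).ncard = 1} ∪ {v : V | ∃ e ∈ F, v ∈ e} := by
    intro v hv
    by_cases hT : ∃ e ∈ F, v ∈ e
    · exact Or.inr hT
    · left
      have hns : G.neighborSet v = H.neighborSet v := by
        ext w
        simp only [SimpleGraph.mem_neighborSet, hH, SimpleGraph.deleteEdges_adj]
        constructor
        · intro h
          exact ⟨h, fun hmem => hT ⟨s(v, w), hmem, by simp⟩⟩
        · exact fun h => h.1
      show (G.neighborSet v).ncard = 1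
      rw [hns]
      exact hv
  have hB : {v : V | (H.neighborSet v).ncard = 1}.ncard ≤
      {v : V | (G.neighborSet v).ncard = 1}.ncard + 2 * k := by
    have htouch := aux_touch_bound F hFfin
    calc {v : V | (H.neighborSet v).ncard = 1}.ncard
        ≤ ({v : V | (G.neighborSet v).ncard = 1} ∪ {v : V | ∃ e ∈ F, v ∈ e}).ncard :=
          Set.ncard_le_ncard hBsub (Set.toFinite _)
      _ ≤ {v : V | (G.neighborSet v).ncard = 1}.ncard + {v : V | ∃ e ∈ F, v ∈ e}.ncard :=
          Set.ncard_union_le _ _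
      _ ≤ {v : V | (G.neighborSet v).ncard = 1}.ncard + 2 * k := by omega
  omega
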